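/- A simple closed curve in the plane has winding number 0 or ±1 around every point not on the curve; hence a closed curve in the plane that winds at least twice around some point cannot be an embedding (must have a self-intersection). -/

import Mathlib

open Real Set

noncomputable section SCW



/-- telescoping product of ratios -/
lemma scw_prod_telescope (v : ℕ → ℂ) (hv : ∀ j, v j ≠ 0) (n : ℕ) :
    (∏ j ∈ Finset.range n, (v (j+1) / v j)) = v n / v 0 := by
  induction n with
  | zero => simp [div_self (hv 0)]
  | succ n ih =>
      rw [Finset.prod_range_succ, ih, div_mul_div_comm, mul_comm (v 0) (v n),
        mul_div_mul_left _ _ (hv n)]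

/-- gap lemma: a continuous function avoiding an interval stays below it -/
lemma scw_gap_le {φ : ℝ → ℝ} {a b lo hi : ℝ} (hab : a ≤ b) (hφ : Continuous φ)
    (hgap : ∀ x ∈ Icc a b, φ x ≤ lo ∨ hi ≤ φ x) (hlohi : lo < hi) (ha : φ a ≤ lo) :
    φ b ≤ lo := by
  by_contra hb
  push_neg at hb
  have hbhi : hi ≤ φ b := by
    rcases hgap b ⟨hab, le_refl b⟩ with h | h
    · linarith
    · exact h
  have hmem : (lo + hi)/2 ∈ Icc (φ a) (φ b) := ⟨by linarith, by linarith⟩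
  obtain ⟨x, hx, hfx⟩ := intermediate_value_Icc hab hφ.continuousOn hmem
  rcases hgap x hx with h | h <;> linarith

lemma scw_gap_ge {φ : ℝ → ℝ} {a b lo hi : ℝ} (hab : a ≤ b) (hφ : Continuous φ)
    (hgap : ∀ x ∈ Icc a b, φ x ≤ lo ∨ hi ≤ φ x) (hlohi : lo < hi) (ha : hi ≤ φ a) :
    hi ≤ φ b := by
  have := scw_gap_le (φ := fun x => -φ x) (lo := -hi) (hi := -lo) hab hφ.neg
    (fun x hx => by
      rcases hgap x hx with h | h
      · right; linarith
      · left; linarith)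
    (by linarith) (by simpa using ha)
  simpa using this

/-- a continuous function with values in `2πℤ` on an interval is constant there -/
lemma scw_const_int {E : ℝ → ℝ} {a b : ℝ} (hab : a ≤ b) (hE : Continuous E)
    (h : ∀ t ∈ Icc a b, ∃ m : ℤ, E t = 2 * π * m) : E b = E a := by
  by_contra hne
  obtain ⟨ma, hma⟩ := h a ⟨le_refl a, hab⟩
  obtain ⟨mb, hmb⟩ := h b ⟨hab, le_refl b⟩
  have hpi := Real.pi_pos
  rcases lt_or_gt_of_ne hne with hlt | hlt
  · -- E b < E a
    have hm : mb < ma := by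
      by_contra hc
      push_neg at hc
      have : (ma : ℝ) ≤ mb := by exact_mod_cast hc
      nlinarith
    have hy : (2*π*mb + π) ∈ Icc (E b) (E a) := by
      constructor
      · nlinarith
      · have : (mb : ℝ) + 1 ≤ ma := by exact_mod_cast hm
        nlinarith
    obtain ⟨x, hx, hfx⟩ := intermediate_value_Icc' hab hE.continuousOn hy
    obtain ⟨m, hm'⟩ := h x hx
    rw [hm'] at hfx
    have : (2:ℝ) * (m - mb) = 1 := by
      have : 2*π*(m - mb) = π := by  linarith
      nlinarith
    have : (2:ℤ) * (m - mb) = 1 := by exact_mod_cast this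
    omega
  · have hm : ma < mb := by
      by_contra hc
      push_neg at hc
      have : (mb : ℝ) ≤ ma := by exact_mod_cast hc
      nlinarith
    have hy : (2*π*ma + π) ∈ Icc (E a) (E b) := by
      constructor
      · nlinarith
      · have : (ma : ℝ) + 1 ≤ mb := by exact_mod_cast hm
        nlinarith
    obtain ⟨x, hx, hfx⟩ := intermediate_value_Icc hab hE.continuousOn hy
    obtain ⟨m, hm'⟩ := h x hx
    rw [hm'] at hfx
    have : (2:ℝ) * (m - ma) = 1 := by
      have : 2*π*(m - ma) = π := by  linarith
      nlinarith
    have : (2:ℤ) * (m - ma) = 1 := by exact_mod_cast this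
    omega



def scw_cl (c x : ℝ) : ℝ := max 0 (min x c)

lemma scw_cl_continuous (c : ℝ) : Continuous (scw_cl c) :=
  continuous_const.max (continuous_id.min continuous_const)

lemma scw_cl_lip (c a b : ℝ) : |scw_cl c a - scw_cl c b| ≤ |a - b| := by
  unfold scw_cl
  have h1 : |max 0 (min a c) - max 0 (min b c)| ≤ |min a c - min b c| := by
    rw [max_comm 0 (min a c), max_comm 0 (min b c)]
    exact abs_max_sub_max_le_abs _ _ _
  have h2 : |min a c - min b c| ≤ |a - b| := by
    rcases le_total a c with h | h <;> rcases le_total b c with h' | h' <;>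
      simp only [min_eq_left, min_eq_right, h, h'] <;>
      rcases abs_cases (a - b) with ⟨he, he2⟩ | ⟨he, he2⟩ <;>
      rw [abs_le] <;> constructor <;> linarith
  linarith

lemma scw_cl_mem (c : ℝ) (hc : 0 ≤ c) (x : ℝ) : scw_cl c x ∈ Icc 0 c :=
  ⟨le_max_left _ _, max_le hc (min_le_right _ _)⟩

lemma scw_cl_of_mem {c x : ℝ} (h0 : 0 ≤ x) (h1 : x ≤ c) : scw_cl c x = x := by
  unfold scw_cl; rw [min_eq_left h1, max_eq_right h0]

lemma scw_cl_of_nonpos {c x : ℝ} (h : x ≤ 0) : scw_cl c x = 0 := by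
  unfold scw_cl
  rcases le_total x c with h' | h'
  · rw [min_eq_left h', max_eq_left h]
  · rw [min_eq_right h', max_eq_left (le_trans h' h)]

lemma scw_cl_of_ge {c x : ℝ} (h : c ≤ x) (hc : 0 ≤ c) : scw_cl c x = c := by
  unfold scw_cl; rw [min_eq_right h, max_eq_right hc]

lemma scw_exp_arg {z : ℂ} (h : ‖z‖ = 1) : Complex.exp (z.arg * Complex.I) = z := by
  have h2 := Complex.norm_mul_exp_arg_mul_I z
  rwa [h, Complex.ofReal_one, one_mul] at h2

lemma scw_ratio_slit {w₁ w₂ : ℂ} (h1 : ‖w₁‖ = 1) (hd : dist w₂ w₁ < 1) :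
    w₂ / w₁ ∈ Complex.slitPlane := by
  have hne : w₁ ≠ 0 := by
    intro h; rw [h] at h1; simp at h1
  have habs : ‖w₂ / w₁ - 1‖ < 1 := by
    have : w₂ / w₁ - 1 = (w₂ - w₁) / w₁ := by field_simp
    rw [this, norm_div, h1, div_one]
    simpa [Complex.dist_eq] using hd
  have hre : 0 < (w₂ / w₁).re := by
    have h3 : |(w₂ / w₁ - 1).re| ≤ ‖w₂ / w₁ - 1‖ := Complex.abs_re_le_norm _
    have h4 : (w₂ / w₁ - 1).re = (w₂ / w₁).re - 1 := by simp
    rw [h4] at h3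
    rcases abs_cases ((w₂ / w₁).re - 1) with ⟨he, _⟩ | ⟨he, _⟩ <;> linarith
  exact Complex.mem_slitPlane_iff.2 (Or.inl hre)

lemma scw_min_diff {x b b' : ℝ} (h : b ≤ b') :
    0 ≤ min x b' - min x b ∧ min x b' - min x b ≤ b' - b := by
  rcases le_total x b with h' | h' <;> rcases le_total x b' with h'' | h'' <;>
    simp only [min_eq_left, min_eq_right, h', h''] <;> constructor <;> linarith


/-- Existence of a continuous angle lift on a rectangle, for a circle-valued map that is
"clamped" to the rectangle `[0,1] × [0,4]`. -/
lemma scw_lift2D {u : ℝ × ℝ → ℂ} (hu : Continuous u) (habs : ∀ p, ‖u p‖ = 1)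
    (hcl : ∀ p : ℝ × ℝ, u p = u (scw_cl 1 p.1, scw_cl 4 p.2)) :
    ∃ Φ : ℝ × ℝ → ℝ, Continuous Φ ∧
      ∀ r ∈ Icc (0:ℝ) 1, ∀ x ∈ Icc (0:ℝ) 4,
        Complex.exp ((Φ (r, x) : ℂ) * Complex.I) = u (r, x) := by
  have hne : ∀ p, u p ≠ 0 := fun p h => by
    have := habs p; rw [h] at this; simp at this
  -- uniform continuity
  obtain ⟨δ, hδpos, hδ⟩ : ∃ δ > 0, ∀ p q : ℝ × ℝ, dist p q < δ → dist (u p) (u q) < 1 := by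
    have hK : IsCompact ((Icc (-9:ℝ) 9) ×ˢ (Icc (-9:ℝ) 9)) :=
      isCompact_Icc.prod isCompact_Icc
    have hUC := hK.uniformContinuousOn_of_continuous hu.continuousOn
    rw [Metric.uniformContinuousOn_iff] at hUC
    obtain ⟨δ, hδpos, hδ⟩ := hUC 1 one_pos
    refine ⟨δ, hδpos, fun p q hpq => ?_⟩
    have hmem : ∀ w : ℝ × ℝ, (scw_cl 1 w.1, scw_cl 4 w.2) ∈ (Icc (-9:ℝ) 9) ×ˢ (Icc (-9:ℝ) 9) := by
      intro w
      constructor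
      · have := scw_cl_mem 1 one_pos.le w.1
        exact ⟨by linarith [this.1], by linarith [this.2]⟩
      · have := scw_cl_mem 4 (by norm_num) w.2
        exact ⟨by linarith [this.1], by linarith [this.2]⟩
    have hdist : dist (scw_cl 1 p.1, scw_cl 4 p.2) (scw_cl 1 q.1, scw_cl 4 q.2) ≤ dist p q := by
      rw [Prod.dist_eq, Prod.dist_eq]
      refine max_le_max ?_ ?_ <;> rw [Real.dist_eq, Real.dist_eq]
      · exact scw_cl_lip 1 p.1 q.1
      · exact scw_cl_lip 4 p.2 q.2
    rw [hcl p, hcl q]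
    exact hδ _ (hmem p) _ (hmem q) (lt_of_le_of_lt hdist hpq)
  -- choose N
  obtain ⟨n₀, hn₀⟩ := exists_nat_ge (4 / δ)
  set N : ℕ := n₀ + 1 with hN
  have hNpos : (0:ℝ) < N := by positivity
  have hmesh : (4:ℝ) / N < δ := by
    rw [div_lt_iff₀ hNpos]
    have h5 : 4 / δ < (N:ℝ) := by
      have : (n₀:ℝ) < N := by exact_mod_cast Nat.lt_succ_self n₀
      linarith
    calc (4:ℝ) = (4/δ) * δ := by field_simp
    _ < N * δ := mul_lt_mul_of_pos_right h5 hδpos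
    _ = δ * N := mul_comm _ _
  -- partition points
  set pt : ℕ → ℝ := fun j => 4 * j / N with hpt
  set rt : ℕ → ℝ := fun i => (i:ℝ) / N with hrt
  have hpt_step : ∀ j : ℕ, pt (j+1) - pt j = 4 / N := by
    intro j; simp only [hpt]; push_cast; field_simp; ring
  have hrt_step : ∀ i : ℕ, rt (i+1) - rt i = 1 / N := by
    intro i; simp only [hrt]; push_cast; field_simp; ring
  have hpt_mono : ∀ j : ℕ, pt j ≤ pt (j+1) := by
    intro j
    have h6 : (0:ℝ) ≤ 4 / N := by positivity
    linarith [hpt_step j]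
  have hrt_mono : ∀ i : ℕ, rt i ≤ rt (i+1) := by
    intro i
    have h6 : (0:ℝ) ≤ 1 / N := by positivity
    linarith [hrt_step i]
  -- slit plane facts for the two kinds of ratios
  have hslit2 : ∀ (j : ℕ) (w : ℝ × ℝ),
      u (w.1, min w.2 (pt (j+1))) / u (w.1, min w.2 (pt j)) ∈ Complex.slitPlane := by
    intro j w
    apply scw_ratio_slit (habs _)
    apply hδ
    rw [Prod.dist_eq]
    have h1 : dist w.1 w.1 = 0 := dist_self _
    have h2 : dist (min w.2 (pt (j+1))) (min w.2 (pt j)) ≤ 4 / N := by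
      rw [Real.dist_eq]
      obtain ⟨ha, hb⟩ := scw_min_diff (x := w.2) (hpt_mono j)
      rw [abs_of_nonneg ha]
      linarith [hpt_step j]
    rw [h1]
    calc max 0 (dist (min w.2 (pt (j+1))) (min w.2 (pt j))) 
        = dist (min w.2 (pt (j+1))) (min w.2 (pt j)) := max_eq_right dist_nonneg
    _ ≤ 4 / N := h2
    _ < δ := hmesh
  have hslit1 : ∀ (i : ℕ) (w : ℝ × ℝ),
      u (min w.1 (rt (i+1)), 0) / u (min w.1 (rt i), 0) ∈ Complex.slitPlane := by
    intro i w
    apply scw_ratio_slit (habs _)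
    apply hδ
    rw [Prod.dist_eq]
    have h1 : dist (0:ℝ) 0 = 0 := dist_self _
    have h2 : dist (min w.1 (rt (i+1))) (min w.1 (rt i)) ≤ 1 / N := by
      rw [Real.dist_eq]
      obtain ⟨ha, hb⟩ := scw_min_diff (x := w.1) (hrt_mono i)
      rw [abs_of_nonneg ha]
      linarith [hrt_step i]
    rw [h1]
    calc max (dist (min w.1 (rt (i+1))) (min w.1 (rt i))) 0 
        = dist (min w.1 (rt (i+1))) (min w.1 (rt i)) := max_eq_left dist_nonneg
    _ ≤ 1 / N := h2
    _ < δ := by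
        have h7 : (1:ℝ)/N ≤ 4/N := by gcongr <;> norm_num
        linarith
  -- the lift
  set Φ : ℝ × ℝ → ℝ := fun w =>
    (u (0, 0)).arg
    + ∑ i ∈ Finset.range N, (u (min w.1 (rt (i+1)), 0) / u (min w.1 (rt i), 0)).arg
    + ∑ j ∈ Finset.range N, (u (w.1, min w.2 (pt (j+1))) / u (w.1, min w.2 (pt j))).arg
    with hΦ
  have hcont1 : ∀ i : ℕ, Continuous fun w : ℝ × ℝ =>
      (u (min w.1 (rt (i+1)), 0) / u (min w.1 (rt i), 0)).arg := by
    intro i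
    have hg : Continuous fun w : ℝ × ℝ => u (min w.1 (rt (i+1)), 0) / u (min w.1 (rt i), 0) := by
      apply Continuous.div
      · exact hu.comp ((continuous_fst.min continuous_const).prodMk continuous_const)
      · exact hu.comp ((continuous_fst.min continuous_const).prodMk continuous_const)
      · exact fun w => hne _
    refine continuous_iff_continuousAt.2 fun w => ?_
    exact ContinuousAt.comp (g := Complex.arg)
      (f := fun w : ℝ × ℝ => u (min w.1 (rt (i+1)), 0) / u (min w.1 (rt i), 0))
      (x := w) (Complex.continuousAt_arg (hslit1 i w)) hg.continuousAt
  have hcont2 : ∀ j : ℕ, Continuous fun w : ℝ × ℝ =>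
      (u (w.1, min w.2 (pt (j+1))) / u (w.1, min w.2 (pt j))).arg := by
    intro j
    have hg : Continuous fun w : ℝ × ℝ => u (w.1, min w.2 (pt (j+1))) / u (w.1, min w.2 (pt j)) := by
      apply Continuous.div
      · exact hu.comp (continuous_fst.prodMk (continuous_snd.min continuous_const))
      · exact hu.comp (continuous_fst.prodMk (continuous_snd.min continuous_const))
      · exact fun w => hne _
    refine continuous_iff_continuousAt.2 fun w => ?_
    exact ContinuousAt.comp (g := Complex.arg)
      (f := fun w : ℝ × ℝ => u (w.1, min w.2 (pt (j+1))) / u (w.1, min w.2 (pt j)))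
      (x := w) (Complex.continuousAt_arg (hslit2 j w)) hg.continuousAt
  refine ⟨Φ, ?_, ?_⟩
  · apply Continuous.add
    apply Continuous.add continuous_const
    · exact continuous_finset_sum _ fun i _ => hcont1 i
    · exact continuous_finset_sum _ fun j _ => hcont2 j
  · intro r hr x hx
    have key : ∀ w : ℝ × ℝ, Complex.exp ((Φ w : ℂ) * Complex.I)
        = u (0,0) * (u (min w.1 1, 0) / u (min w.1 0, 0))
          * (u (w.1, min w.2 4) / u (w.1, min w.2 0)) := by
      intro w
      have hsum : ((Φ w : ℝ) : ℂ) * Complex.I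
          = ((u (0,0)).arg : ℂ) * Complex.I
            + (∑ i ∈ Finset.range N,
                ((u (min w.1 (rt (i+1)), 0) / u (min w.1 (rt i), 0)).arg : ℂ) * Complex.I)
            + (∑ j ∈ Finset.range N,
                ((u (w.1, min w.2 (pt (j+1))) / u (w.1, min w.2 (pt j))).arg : ℂ) * Complex.I) := by
        simp only [hΦ]
        push_cast
        rw [← Finset.sum_mul, ← Finset.sum_mul]
        ring
      rw [hsum, Complex.exp_add, Complex.exp_add, Complex.exp_sum, Complex.exp_sum]
      have habs_ratio : ∀ z z' : ℂ, ‖z‖ = 1 → ‖z'‖ = 1 →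
          ‖z / z'‖ = 1 := by
        intro z z' h h'; rw [norm_div, h, h', div_one]
      have e0 : Complex.exp (((u (0,0)).arg : ℂ) * Complex.I) = u (0,0) := scw_exp_arg (habs _)
      have e1 : ∀ i ∈ Finset.range N,
          Complex.exp (((u (min w.1 (rt (i+1)), 0) / u (min w.1 (rt i), 0)).arg : ℂ) * Complex.I)
          = u (min w.1 (rt (i+1)), 0) / u (min w.1 (rt i), 0) :=
        fun i _ => scw_exp_arg (habs_ratio _ _ (habs _) (habs _))
      have e2 : ∀ j ∈ Finset.range N,
          Complex.exp (((u (w.1, min w.2 (pt (j+1))) / u (w.1, min w.2 (pt j))).arg : ℂ) * Complex.I)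
          = u (w.1, min w.2 (pt (j+1))) / u (w.1, min w.2 (pt j)) :=
        fun j _ => scw_exp_arg (habs_ratio _ _ (habs _) (habs _))
      rw [e0, Finset.prod_congr rfl e1, Finset.prod_congr rfl e2]
      rw [scw_prod_telescope (fun i => u (min w.1 (rt i), 0)) (fun i => hne _) N]
      rw [scw_prod_telescope (fun j => u (w.1, min w.2 (pt j))) (fun j => hne _) N]
      have hrtN : rt N = 1 := by simp only [hrt]; field_simp
      have hrt0 : rt 0 = 0 := by simp only [hrt]; norm_num
      have hptN : pt N = 4 := by simp only [hpt]; field_simp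
      have hpt0 : pt 0 = 0 := by simp only [hpt]; norm_num
      rw [hrtN, hrt0, hptN, hpt0]
    rw [key (r, x)]
    simp only []
    rw [min_eq_left hr.2, min_eq_right hr.1, min_eq_left hx.2, min_eq_right hx.1]
    have h9 : u 0 * u (r, 0) ≠ 0 := mul_ne_zero (hne _) (hne _)
    field_simp
    exact mul_div_cancel_left₀ _ (mul_ne_zero (hne _) (hne _))

lemma scw_div_ofReal_im (z : ℂ) (t : ℝ) : (z / (t:ℂ)).im = z.im / t := by
  rw [div_eq_mul_inv, ← Complex.ofReal_inv, Complex.mul_im, Complex.ofReal_re,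
    Complex.ofReal_im, mul_zero, zero_add, div_eq_mul_inv]

lemma scw_div_ofReal_re (z : ℂ) (t : ℝ) : (z / (t:ℂ)).re = z.re / t := by
  rw [div_eq_mul_inv, ← Complex.ofReal_inv, Complex.mul_re, Complex.ofReal_re,
    Complex.ofReal_im, mul_zero, sub_zero, div_eq_mul_inv]

lemma scw_exp_eq_one {a : ℝ} (h : Complex.exp ((a:ℂ) * Complex.I) = 1) :
    ∃ m : ℤ, a = 2*π*m := by
  obtain ⟨n, hn⟩ := Complex.exp_eq_one_iff.mp h
  refine ⟨n, ?_⟩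
  have him := congrArg Complex.im hn
  simp [Complex.mul_im] at him
  rw [him]; ring

lemma scw_sin_neg_of {y : ℝ} (h1 : π < y) (h2 : y < 2*π) : Real.sin y < 0 := by
  have h3 : 0 < Real.sin (y - π) := Real.sin_pos_of_pos_of_lt_pi (by linarith) (by linarith)
  rw [Real.sin_sub_pi] at h3; linarith

lemma scw_sin_neg_of' {y : ℝ} (h1 : -π < y) (h2 : y < 0) : Real.sin y < 0 := by
  have h3 : 0 < Real.sin (-y) := Real.sin_pos_of_pos_of_lt_pi (by linarith) (by linarith)
  rw [Real.sin_neg] at h3; linarith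

lemma scw_cos_neg_of {y : ℝ} (h1 : π/2 < y) (h2 : y < 3*π/2) : Real.cos y < 0 := by
  have h3 : 0 < Real.cos (y - π) := Real.cos_pos_of_mem_Ioo ⟨by linarith, by linarith⟩
  rw [Real.cos_sub_pi] at h3; linarith


/-- Poincaré–Miranda theorem in dimension 2. -/
lemma scw_miranda {f g : ℝ × ℝ → ℝ} (hf : Continuous f) (hg : Continuous g)
    (h1 : ∀ y ∈ Icc (0:ℝ) 1, 0 ≤ f (0, y)) (h2 : ∀ y ∈ Icc (0:ℝ) 1, f (1, y) ≤ 0)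
    (h3 : ∀ x ∈ Icc (0:ℝ) 1, 0 ≤ g (x, 0)) (h4 : ∀ x ∈ Icc (0:ℝ) 1, g (x, 1) ≤ 0) :
    ∃ q : ℝ × ℝ, q.1 ∈ Icc (0:ℝ) 1 ∧ q.2 ∈ Icc (0:ℝ) 1 ∧ f q = 0 ∧ g q = 0 := by
  by_contra hno
  push_neg at hno
  have pi_pos := Real.pi_pos
  -- clamp to the unit square
  set cp : ℝ × ℝ → ℝ × ℝ := fun q => (scw_cl 1 q.1, scw_cl 1 q.2) with hcp
  clear_value cp
  have hcp_mem : ∀ q : ℝ × ℝ, (cp q).1 ∈ Icc (0:ℝ) 1 ∧ (cp q).2 ∈ Icc (0:ℝ) 1 := by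
    intro q
    rw [hcp]
    exact ⟨scw_cl_mem 1 zero_le_one q.1, scw_cl_mem 1 zero_le_one q.2⟩
  have hcp_id : ∀ a c : ℝ, a ∈ Icc (0:ℝ) 1 → c ∈ Icc (0:ℝ) 1 → cp (a, c) = (a, c) := by
    intro a c hq1 hq2
    rw [hcp]
    simp only []
    rw [scw_cl_of_mem hq1.1 hq1.2, scw_cl_of_mem hq2.1 hq2.2]
  have hcp_cont : Continuous cp := by
    rw [hcp]
    exact ((scw_cl_continuous 1).comp continuous_fst).prodMk
      ((scw_cl_continuous 1).comp continuous_snd)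
  set V : ℝ × ℝ → ℂ := fun q => (f (cp q) : ℂ) + (g (cp q) : ℂ) * Complex.I with hV
  clear_value V
  have hVne : ∀ q, V q ≠ 0 := by
    intro q hVq
    rw [hV] at hVq
    have hfre : f (cp q) = 0 := by
      have := congrArg Complex.re hVq; simpa using this
    have hgim : g (cp q) = 0 := by
      have := congrArg Complex.im hVq; simpa using this
    exact hno (cp q) (hcp_mem q).1 (hcp_mem q).2 hfre hgim
  have hVcont : Continuous V := by
    rw [hV]
    exact (Complex.continuous_ofReal.comp (hf.comp hcp_cont)).add
      ((Complex.continuous_ofReal.comp (hg.comp hcp_cont)).mul continuous_const)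
  set u : ℝ × ℝ → ℂ := fun q => V q / (‖V q‖ : ℂ) with hu
  clear_value u
  have habsV_pos : ∀ q, 0 < ‖V q‖ := fun q => norm_pos_iff.mpr (hVne q)
  have hu_abs : ∀ q, ‖u q‖ = 1 := by
    intro q
    rw [hu]
    simp only []
    rw [norm_div, Complex.norm_real, norm_norm,
      div_self (ne_of_gt (habsV_pos q))]
  have hu_cont : Continuous u := by
    rw [hu]
    exact hVcont.div (Complex.continuous_ofReal.comp (continuous_norm.comp hVcont))
      fun q => Complex.ofReal_ne_zero.2 (ne_of_gt (habsV_pos q))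
  have hu_ne : ∀ q, u q ≠ 0 := by
    intro q h
    have := hu_abs q; rw [h] at this; simp at this
  have hu_im : ∀ q, (u q).im = g (cp q) / ‖V q‖ := by
    intro q
    rw [hu]
    simp only []
    rw [scw_div_ofReal_im]
    congr 1
    rw [hV]
    simp
  have hu_re : ∀ q, (u q).re = f (cp q) / ‖V q‖ := by
    intro q
    rw [hu]
    simp only []
    rw [scw_div_ofReal_re]
    congr 1
    rw [hV]
    simp
  -- the boundary loop of the unit square
  set b : ℝ → ℝ × ℝ := fun x => (scw_cl 1 (min x (3 - x)), scw_cl 1 (min (x-1) (4-x))) with hb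
  clear_value b
  have hb_cont : Continuous b := by
    rw [hb]
    exact ((scw_cl_continuous 1).comp
        (continuous_id.min (continuous_const.sub continuous_id))).prodMk
      ((scw_cl_continuous 1).comp
        ((continuous_id.sub continuous_const).min (continuous_const.sub continuous_id)))
  have hbA : ∀ x ∈ Icc (0:ℝ) 1, b x = (x, 0) := by
    intro x hx
    rw [hb]
    simp only [Prod.mk.injEq]
    constructor
    · rw [min_eq_left (by linarith [hx.1, hx.2]), scw_cl_of_mem hx.1 hx.2]
    · exact scw_cl_of_nonpos (le_trans (min_le_left _ _) (by linarith [hx.2]))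
  have hbB : ∀ x ∈ Icc (1:ℝ) 2, b x = (1, x - 1) := by
    intro x hx
    rw [hb]
    simp only [Prod.mk.injEq]
    constructor
    · apply scw_cl_of_ge _ zero_le_one
      exact le_min (by linarith [hx.1]) (by linarith [hx.2])
    · rw [min_eq_left (by linarith [hx.2])]
      exact scw_cl_of_mem (by linarith [hx.1]) (by linarith [hx.2])
  have hbC : ∀ x ∈ Icc (2:ℝ) 3, b x = (3 - x, 1) := by
    intro x hx
    rw [hb]
    simp only [Prod.mk.injEq]
    constructor
    · rw [min_eq_right (by linarith [hx.1])]
      exact scw_cl_of_mem (by linarith [hx.2]) (by linarith [hx.1])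
    · apply scw_cl_of_ge _ zero_le_one
      exact le_min (by linarith [hx.1]) (by linarith [hx.2])
  have hbD : ∀ x ∈ Icc (3:ℝ) 4, b x = (0, 4 - x) := by
    intro x hx
    rw [hb]
    simp only [Prod.mk.injEq]
    constructor
    · exact scw_cl_of_nonpos (le_trans (min_le_right _ _) (by linarith [hx.1]))
    · rw [min_eq_right (by linarith [hx.1])]
      exact scw_cl_of_mem (by linarith [hx.2]) (by linarith [hx.1])
  have hb0 : b 0 = (0, 0) := by
    have := hbA 0 ⟨le_refl 0, zero_le_one⟩; simpa using this
  have hb4 : b 4 = (0, 0) := by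
    have := hbD 4 ⟨by norm_num, le_refl 4⟩; simpa using this
  have hbcl : ∀ x : ℝ, b (scw_cl 4 x) = b x := by
    intro x
    rcases le_total x 0 with hx | hx
    · have hx1 : b x = (0, 0) := by
        rw [hb]
        simp only [Prod.mk.injEq]
        constructor
        · exact scw_cl_of_nonpos (le_trans (min_le_left _ _) hx)
        · exact scw_cl_of_nonpos (le_trans (min_le_left _ _) (by linarith))
      rw [scw_cl_of_nonpos hx, hb0, hx1]
    · rcases le_total x 4 with hx' | hx'
      · rw [scw_cl_of_mem hx hx']
      · have hx1 : b x = (0, 0) := by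
          rw [hb]
          simp only [Prod.mk.injEq]
          constructor
          · exact scw_cl_of_nonpos (le_trans (min_le_right _ _) (by linarith))
          · exact scw_cl_of_nonpos (le_trans (min_le_right _ _) (by linarith))
        rw [scw_cl_of_ge hx' (by norm_num), hb4, hx1]
  -- the homotopy between the boundary loop and the center
  set H : ℝ × ℝ → ℂ := fun w =>
    u (1/2 + scw_cl 1 w.1 * ((b w.2).1 - 1/2), 1/2 + scw_cl 1 w.1 * ((b w.2).2 - 1/2)) with hH
  clear_value H
  have hH_cont : Continuous H := by
    rw [hH]
    apply hu_cont.comp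
    apply Continuous.prodMk
    · exact continuous_const.add
        ((((scw_cl_continuous 1).comp continuous_fst)).mul
          (((continuous_fst.comp (hb_cont.comp continuous_snd))).sub continuous_const))
    · exact continuous_const.add
        ((((scw_cl_continuous 1).comp continuous_fst)).mul
          (((continuous_snd.comp (hb_cont.comp continuous_snd))).sub continuous_const))
  have hH_abs : ∀ w, ‖H w‖ = 1 := by
    intro w; rw [hH]; exact hu_abs _
  have hH_cl : ∀ w : ℝ × ℝ, H w = H (scw_cl 1 w.1, scw_cl 4 w.2) := by
    intro w
    rw [hH]
    dsimp only
    rw [scw_cl_of_mem (scw_cl_mem 1 zero_le_one w.1).1 (scw_cl_mem 1 zero_le_one w.1).2,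
      hbcl w.2]
  obtain ⟨Φ, hΦcont, hΦ⟩ := scw_lift2D hH_cont hH_abs hH_cl
  have hH1 : ∀ x : ℝ, H (1, x) = u (b x) := by
    intro x
    rw [hH]
    dsimp only
    have hcl1 : scw_cl 1 (1:ℝ) = 1 := scw_cl_of_mem zero_le_one (le_refl 1)
    rw [hcl1]
    congr 1
    rw [Prod.ext_iff]
    constructor
    · simp
    · simp
  have hH0 : ∀ x : ℝ, H (0, x) = u (1/2, 1/2) := by
    intro x
    rw [hH]
    dsimp only
    have hcl0 : scw_cl 1 (0:ℝ) = 0 := scw_cl_of_nonpos (le_refl 0)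
    rw [hcl0]
    norm_num
  have hmem01 : (1:ℝ) ∈ Icc (0:ℝ) 1 := ⟨zero_le_one, le_refl 1⟩
  have hmem00 : (0:ℝ) ∈ Icc (0:ℝ) 1 := ⟨le_refl 0, zero_le_one⟩
  have hmem04 : (4:ℝ) ∈ Icc (0:ℝ) 4 := ⟨by norm_num, le_refl 4⟩
  have hmem004 : (0:ℝ) ∈ Icc (0:ℝ) 4 := ⟨le_refl 0, by norm_num⟩
  have hDint : ∀ r ∈ Icc (0:ℝ) 1, ∃ m : ℤ, Φ (r, 4) - Φ (r, 0) = 2*π*m := by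
    intro r hr
    apply scw_exp_eq_one
    push_cast
    rw [sub_mul, Complex.exp_sub, hΦ r hr 4 hmem04, hΦ r hr 0 hmem004]
    have hb40 : H (r, 4) = H (r, 0) := by
      rw [hH]
      dsimp only
      rw [hb4, hb0]
    rw [hb40, div_self]
    rw [hH]
    exact hu_ne _
  have hE0 : ∀ x ∈ Icc (0:ℝ) 4, ∃ m : ℤ, Φ (0, x) - Φ (0, 0) = 2*π*m := by
    intro x hx
    apply scw_exp_eq_one
    push_cast
    rw [sub_mul, Complex.exp_sub, hΦ 0 hmem00 x hx, hΦ 0 hmem00 0 hmem004]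
    rw [hH0 x, hH0 0, div_self (hu_ne _)]
  have hΦ04 : Φ (0, 4) = Φ (0, 0) := by
    have hcont : Continuous fun x : ℝ => Φ (0, x) - Φ (0, 0) :=
      (hΦcont.comp (continuous_const.prodMk continuous_id)).sub continuous_const
    have h7 : Φ (0, 4) - Φ (0, 0) = Φ (0, 0) - Φ (0, 0) :=
      scw_const_int (by norm_num : (0:ℝ) ≤ 4) hcont hE0
    linarith [h7]
  have hD14 : Φ (1, 4) = Φ (1, 0) := by
    have hcont : Continuous fun r : ℝ => Φ (r, 4) - Φ (r, 0) :=
      (hΦcont.comp (continuous_id.prodMk continuous_const)).sub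
        (hΦcont.comp (continuous_id.prodMk continuous_const))
    have h7 : Φ (1, 4) - Φ (1, 0) = Φ (0, 4) - Φ (0, 0) :=
      scw_const_int zero_le_one hcont hDint
    linarith [h7, hΦ04]
  -- the lifted boundary angle
  set φ : ℝ → ℝ := fun x => Φ (1, x) with hφdef
  clear_value φ
  have hφcont : Continuous φ := by
    rw [hφdef]
    exact hΦcont.comp (continuous_const.prodMk continuous_id)
  have hφ : ∀ x ∈ Icc (0:ℝ) 4, Complex.exp ((φ x : ℂ) * Complex.I) = u (b x) := by
    intro x hx
    rw [hφdef]
    simp only []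
    rw [hΦ 1 hmem01 x hx, hH1 x]
  have hφ40 : φ 4 = φ 0 := by rw [hφdef]; exact hD14
  -- sin and cos of the lift
  have hsin : ∀ x ∈ Icc (0:ℝ) 4, Real.sin (φ x) = g (cp (b x)) / ‖V (b x)‖ := by
    intro x hx
    have := congrArg Complex.im (hφ x hx)
    rwa [Complex.exp_ofReal_mul_I_im, hu_im] at this
  have hcos : ∀ x ∈ Icc (0:ℝ) 4, Real.cos (φ x) = f (cp (b x)) / ‖V (b x)‖ := by
    intro x hx
    have := congrArg Complex.re (hφ x hx)
    rwa [Complex.exp_ofReal_mul_I_re, hu_re] at this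
  have hsin_nonneg : ∀ x ∈ Icc (0:ℝ) 4, 0 ≤ g (cp (b x)) → 0 ≤ Real.sin (φ x) := by
    intro x hx hgx
    rw [hsin x hx]
    exact div_nonneg hgx (norm_nonneg _)
  have hsin_nonpos : ∀ x ∈ Icc (0:ℝ) 4, g (cp (b x)) ≤ 0 → Real.sin (φ x) ≤ 0 := by
    intro x hx hgx
    rw [hsin x hx]
    exact div_nonpos_of_nonpos_of_nonneg hgx (norm_nonneg _)
  have hcos_nonneg : ∀ x ∈ Icc (0:ℝ) 4, 0 ≤ f (cp (b x)) → 0 ≤ Real.cos (φ x) := by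
    intro x hx hfx
    rw [hcos x hx]
    exact div_nonneg hfx (norm_nonneg _)
  have hcos_nonpos : ∀ x ∈ Icc (0:ℝ) 4, f (cp (b x)) ≤ 0 → Real.cos (φ x) ≤ 0 := by
    intro x hx hfx
    rw [hcos x hx]
    exact div_nonpos_of_nonpos_of_nonneg hfx (norm_nonneg _)
  -- normalize by the starting multiple of 2π
  set k : ℤ := ⌊φ 0 / (2*π)⌋ with hk
  clear_value k
  have two_pi_pos : (0:ℝ) < 2*π := by linarith
  have hk1 : 2*π*k ≤ φ 0 := by
    rw [hk]
    have h := Int.floor_le (φ 0 / (2*π))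
    calc 2*π*(⌊φ 0 / (2*π)⌋:ℝ) ≤ 2*π*(φ 0 / (2*π)) :=
          mul_le_mul_of_nonneg_left h (le_of_lt two_pi_pos)
    _ = φ 0 := by field_simp
  have hk2 : φ 0 < 2*π*k + 2*π := by
    rw [hk]
    have h := Int.lt_floor_add_one (φ 0 / (2*π))
    have h' := mul_lt_mul_of_pos_left h two_pi_pos
    calc φ 0 = 2*π*(φ 0 / (2*π)) := by field_simp
    _ < 2*π*((⌊φ 0 / (2*π)⌋:ℝ) + 1) := h'
    _ = 2*π*(⌊φ 0 / (2*π)⌋:ℝ) + 2*π := by ring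
  set ψ : ℝ → ℝ := fun x => φ x - 2*π*k with hψdef
  clear_value ψ
  have hψcont : Continuous ψ := by
    rw [hψdef]
    exact hφcont.sub continuous_const
  have hψsin : ∀ x, Real.sin (ψ x) = Real.sin (φ x) := by
    intro x
    have hx : ψ x = φ x - (k:ℝ) * (2*π) := by rw [hψdef]; ring
    rw [hx, Real.sin_sub_int_mul_two_pi]
  have hψcos : ∀ x, Real.cos (ψ x) = Real.cos (φ x) := by
    intro x
    have hx : ψ x = φ x - (k:ℝ) * (2*π) := by rw [hψdef]; ring
    rw [hx, Real.cos_sub_int_mul_two_pi]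
  -- side sign conditions transported to ψ
  have side1 : ∀ x ∈ Icc (0:ℝ) 1, 0 ≤ Real.sin (ψ x) := by
    intro x hx
    rw [hψsin]
    apply hsin_nonneg x ⟨hx.1, by linarith [hx.2]⟩
    rw [hbA x hx, hcp_id x 0 hx hmem00]
    exact h3 x hx
  have side2 : ∀ x ∈ Icc (1:ℝ) 2, Real.cos (ψ x) ≤ 0 := by
    intro x hx
    rw [hψcos]
    apply hcos_nonpos x ⟨by linarith [hx.1], by linarith [hx.2]⟩
    have hm : x - 1 ∈ Icc (0:ℝ) 1 := Set.mem_Icc.mpr ⟨by linarith [hx.1], by linarith [hx.2]⟩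
    rw [hbB x hx, hcp_id 1 (x-1) hmem01 hm]
    exact h2 (x-1) hm
  have side3 : ∀ x ∈ Icc (2:ℝ) 3, Real.sin (ψ x) ≤ 0 := by
    intro x hx
    rw [hψsin]
    apply hsin_nonpos x ⟨by linarith [hx.1], by linarith [hx.2]⟩
    have hm : 3 - x ∈ Icc (0:ℝ) 1 := Set.mem_Icc.mpr ⟨by linarith [hx.2], by linarith [hx.1]⟩
    rw [hbC x hx, hcp_id (3-x) 1 hm hmem01]
    exact h4 (3-x) hm
  have side4 : ∀ x ∈ Icc (3:ℝ) 4, 0 ≤ Real.cos (ψ x) := by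
    intro x hx
    rw [hψcos]
    apply hcos_nonneg x ⟨by linarith [hx.1], hx.2⟩
    have hm : 4 - x ∈ Icc (0:ℝ) 1 := Set.mem_Icc.mpr ⟨by linarith [hx.2], by linarith [hx.1]⟩
    rw [hbD x hx, hcp_id 0 (4-x) hmem00 hm]
    exact h1 (4-x) hm
  -- corner signs
  have corner0 : 0 ≤ Real.sin (ψ 0) ∧ 0 ≤ Real.cos (ψ 0) := by
    constructor
    · exact side1 0 hmem00
    · rw [hψcos]
      apply hcos_nonneg 0 hmem004
      rw [hb0, hcp_id 0 0 hmem00 hmem00]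
      exact h1 0 hmem00
  have corner4 : 0 ≤ Real.sin (ψ 4) := by
    rw [hψsin]
    apply hsin_nonneg 4 hmem04
    rw [hb4, hcp_id 0 0 hmem00 hmem00]
    exact h3 0 hmem00
  -- pin down ψ 0 ∈ [0, π/2]
  have hψ0a : 0 ≤ ψ 0 := by
    rw [hψdef]
    simp only []
    linarith
  have hψ0b : ψ 0 < 2*π := by
    rw [hψdef]
    simp only []
    linarith
  have hψ0 : ψ 0 ≤ π/2 := by
    by_contra hcon
    push_neg at hcon
    rcases lt_or_ge (ψ 0) (3*π/2) with hc | hc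
    · exact absurd corner0.2 (not_le.2 (scw_cos_neg_of hcon hc))
    · exact absurd corner0.1 (not_le.2 (scw_sin_neg_of (y := ψ 0) (by linarith) hψ0b))
  -- chain through the four sides
  have step1a : ψ 1 ≤ π := by
    have hgap : ∀ x ∈ Icc (0:ℝ) 1, ψ x ≤ π ∨ 2*π ≤ ψ x := by
      intro x hx
      by_contra hcon
      push_neg at hcon
      exact absurd (side1 x hx) (not_le.2 (scw_sin_neg_of hcon.1 hcon.2))
    have hlh : π < 2*π := by linarith
    have ha : ψ 0 ≤ π := by linarith
    exact scw_gap_le zero_le_one hψcont hgap hlh ha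
  have step1b : 0 ≤ ψ 1 := by
    have hgap : ∀ x ∈ Icc (0:ℝ) 1, ψ x ≤ -π ∨ 0 ≤ ψ x := by
      intro x hx
      by_contra hcon
      push_neg at hcon
      exact absurd (side1 x hx) (not_le.2 (scw_sin_neg_of' hcon.1 hcon.2))
    have hlh : -π < (0:ℝ) := by linarith
    exact scw_gap_ge zero_le_one hψcont hgap hlh hψ0a
  have corner1 : π/2 ≤ ψ 1 := by
    have hcos1 : Real.cos (ψ 1) ≤ 0 := side2 1 ⟨le_refl 1, by norm_num⟩
    by_contra hcon
    push_neg at hcon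
    have hpos : 0 < Real.cos (ψ 1) := Real.cos_pos_of_mem_Ioo ⟨by linarith, hcon⟩
    linarith
  have step2a : ψ 2 ≤ 3*π/2 := by
    have hgap : ∀ x ∈ Icc (1:ℝ) 2, ψ x ≤ 3*π/2 ∨ 5*π/2 ≤ ψ x := by
      intro x hx
      by_contra hcon
      push_neg at hcon
      have hcpos : 0 < Real.cos (ψ x) := by
        have h5 : 0 < Real.cos (ψ x - 2*π) :=
          Real.cos_pos_of_mem_Ioo ⟨by linarith [hcon.1], by linarith [hcon.2]⟩
        rwa [Real.cos_sub_two_pi] at h5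
      exact absurd (side2 x hx) (not_le.2 hcpos)
    have hlh : 3*π/2 < 5*π/2 := by linarith
    have ha : ψ 1 ≤ 3*π/2 := by linarith
    exact scw_gap_le (by norm_num : (1:ℝ) ≤ 2) hψcont hgap hlh ha
  have step2b : π/2 ≤ ψ 2 := by
    have hgap : ∀ x ∈ Icc (1:ℝ) 2, ψ x ≤ -π/2 ∨ π/2 ≤ ψ x := by
      intro x hx
      by_contra hcon
      push_neg at hcon
      have hcpos : 0 < Real.cos (ψ x) :=
        Real.cos_pos_of_mem_Ioo ⟨by linarith [hcon.1], hcon.2⟩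
      exact absurd (side2 x hx) (not_le.2 hcpos)
    have hlh : -π/2 < π/2 := by linarith
    exact scw_gap_ge (by norm_num : (1:ℝ) ≤ 2) hψcont hgap hlh corner1
  have corner2 : π ≤ ψ 2 := by
    have hsin2 : Real.sin (ψ 2) ≤ 0 := side3 2 ⟨le_refl 2, by norm_num⟩
    by_contra hcon
    push_neg at hcon
    have hpos : 0 < Real.sin (ψ 2) := Real.sin_pos_of_pos_of_lt_pi (by linarith) hcon
    linarith
  have step3a : ψ 3 ≤ 2*π := by
    have hgap : ∀ x ∈ Icc (2:ℝ) 3, ψ x ≤ 2*π ∨ 3*π ≤ ψ x := by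
      intro x hx
      by_contra hcon
      push_neg at hcon
      have hspos : 0 < Real.sin (ψ x) := by
        have h5 : 0 < Real.sin (ψ x - 2*π) :=
          Real.sin_pos_of_pos_of_lt_pi (by linarith [hcon.1]) (by linarith [hcon.2])
        rwa [Real.sin_sub_two_pi] at h5
      exact absurd (side3 x hx) (not_le.2 hspos)
    have hlh : 2*π < 3*π := by linarith
    have ha : ψ 2 ≤ 2*π := by linarith
    exact scw_gap_le (by norm_num : (2:ℝ) ≤ 3) hψcont hgap hlh ha
  have step3b : π ≤ ψ 3 := by
    have hgap : ∀ x ∈ Icc (2:ℝ) 3, ψ x ≤ 0 ∨ π ≤ ψ x := by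
      intro x hx
      by_contra hcon
      push_neg at hcon
      have hspos : 0 < Real.sin (ψ x) :=
        Real.sin_pos_of_pos_of_lt_pi hcon.1 hcon.2
      exact absurd (side3 x hx) (not_le.2 hspos)
    have hlh : (0:ℝ) < π := pi_pos
    exact scw_gap_ge (by norm_num : (2:ℝ) ≤ 3) hψcont hgap hlh corner2
  have corner3 : 3*π/2 ≤ ψ 3 := by
    have hcos3 : 0 ≤ Real.cos (ψ 3) := side4 3 ⟨le_refl 3, by norm_num⟩
    by_contra hcon
    push_neg at hcon
    have hneg : Real.cos (ψ 3) < 0 := scw_cos_neg_of (by linarith) hcon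
    linarith
  have step4b : 3*π/2 ≤ ψ 4 := by
    have hgap : ∀ x ∈ Icc (3:ℝ) 4, ψ x ≤ π/2 ∨ 3*π/2 ≤ ψ x := by
      intro x hx
      by_contra hcon
      push_neg at hcon
      have hcneg : Real.cos (ψ x) < 0 := scw_cos_neg_of hcon.1 hcon.2
      exact absurd (side4 x hx) (not_le.2 hcneg)
    have hlh : π/2 < 3*π/2 := by linarith
    exact scw_gap_ge (by norm_num : (3:ℝ) ≤ 4) hψcont hgap hlh corner3
  have step4a : ψ 4 ≤ 5*π/2 := by
    have hgap : ∀ x ∈ Icc (3:ℝ) 4, ψ x ≤ 5*π/2 ∨ 7*π/2 ≤ ψ x := by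
      intro x hx
      by_contra hcon
      push_neg at hcon
      have hcneg : Real.cos (ψ x) < 0 := by
        have h5 : Real.cos (ψ x - 2*π) < 0 :=
          scw_cos_neg_of (by linarith [hcon.1]) (by linarith [hcon.2])
        rwa [Real.cos_sub_two_pi] at h5
      exact absurd (side4 x hx) (not_le.2 hcneg)
    have hlh : 5*π/2 < 7*π/2 := by linarith
    have ha : ψ 3 ≤ 5*π/2 := by linarith
    exact scw_gap_le (by norm_num : (3:ℝ) ≤ 4) hψcont hgap hlh ha
  have corner4' : 2*π ≤ ψ 4 := by
    by_contra hcon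
    push_neg at hcon
    have hneg : Real.sin (ψ 4) < 0 := scw_sin_neg_of (by linarith) hcon
    linarith [corner4]
  have hψ40 : ψ 4 = ψ 0 := by
    rw [hψdef]
    simp only []
    rw [hφ40]
  rw [hψ40] at corner4'
  linarith

/-- Main lemma: a simple closed curve cannot wind `|k| ≥ 2` times. -/
lemma scw_main {c : ℝ → ℂ} {θ : ℝ → ℝ} {rr : ℝ → ℝ} {p : ℂ} {k : ℤ}
    (hθ : Continuous θ) (hrr : Continuous rr) (hrpos : ∀ t, 0 < rr t)
    (hlift : ∀ t : ℝ, c t - p = (rr t : ℂ) * Complex.exp ((θ t : ℂ) * Complex.I))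
    (hper : ∀ t : ℝ, c (t + 1) = c t)
    (hθper : ∀ t : ℝ, θ (t + 1) = θ t + 2*π*k)
    (hk : 2 ≤ |k|)
    (hinj : Set.InjOn c (Set.Ico (0:ℝ) 1)) : False := by
  have pi_pos := Real.pi_pos
  -- periodicity in integer steps
  have hcper : ∀ (m : ℤ) (t : ℝ), c (t + m) = c t := by
    intro m
    induction m using Int.induction_on with
    | zero => intro t; simp
    | succ n ih =>
        intro t
        have h1 : (t : ℝ) + ((n:ℤ)+1 : ℤ) = (t + (n:ℤ)) + 1 := by push_cast; ring
        rw [h1, hper (t + (n:ℤ)), ih t]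
    | pred n ih =>
        intro t
        have h1 : (t : ℝ) + (-(n:ℤ)-1 : ℤ) + 1 = t + (-(n:ℤ) : ℤ) := by push_cast; ring
        have h2 := hper (t + ((-(n:ℤ)-1 : ℤ) : ℝ))
        rw [h1] at h2
        exact h2.symm.trans (ih t)
  have hθm : ∀ (m : ℤ) (t : ℝ), θ (t + m) = θ t + 2*π*k*m := by
    intro m
    induction m using Int.induction_on with
    | zero => intro t; simp
    | succ n ih =>
        intro t
        have h1 : (t : ℝ) + ((n:ℤ)+1 : ℤ) = (t + (n:ℤ)) + 1 := by push_cast; ring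
        rw [h1, hθper (t + (n:ℤ)), ih t]
        push_cast; ring
    | pred n ih =>
        intro t
        have h1 : (t : ℝ) + (-(n:ℤ)-1 : ℤ) + 1 = t + (-(n:ℤ) : ℤ) := by push_cast; ring
        have h2 := hθper (t + ((-(n:ℤ)-1 : ℤ) : ℝ))
        rw [h1, ih t] at h2
        have h3 : θ (t + ((-(n:ℤ)-1 : ℤ) : ℝ)) = θ t + 2*π*k*(-(n:ℝ)) - 2*π*k := by
          push_cast at h2 ⊢; linarith
        rw [h3]; push_cast; ring
  -- the radius function
  have habs : ∀ t, rr t = ‖c t - p‖ := by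
    intro t
    rw [hlift t, norm_mul, Complex.norm_real, Complex.norm_exp_ofReal_mul_I, mul_one, Real.norm_eq_abs,
      abs_of_pos (hrpos t)]
  have hrrint : ∀ (m : ℤ) (t : ℝ), rr (t + m) = rr t := by
    intro m t
    rw [habs, habs, hcper m t]
  -- key separation property from injectivity
  have hsep : ∀ s t : ℝ, ¬(θ s = θ t + 2*π ∧ rr s = rr t) := by
    rintro s t ⟨h1, h2⟩
    have hcs : c s = c t := by
      have e1 := hlift s
      have e2 := hlift t
      rw [h1, h2] at e1
      have e3 : ((θ t + 2*π : ℝ) : ℂ) * Complex.I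
          = (θ t : ℂ) * Complex.I + 2*π*Complex.I := by push_cast; ring
      rw [e3, Complex.exp_add, Complex.exp_two_pi_mul_I, mul_one] at e1
      have h11 : c s - p = c t - p := e1.trans e2.symm
      exact sub_left_injective h11
    have hfr : ∀ a : ℝ, c (Int.fract a) = c a := by
      intro a
      have h3 : a = Int.fract a + (⌊a⌋ : ℤ) := by
        have := Int.floor_add_fract a
        linarith
      calc c (Int.fract a) = c (Int.fract a + (⌊a⌋:ℤ)) := (hcper ⌊a⌋ (Int.fract a)).symm
      _ = c a := by rw [← h3]
    have hmemf : ∀ a : ℝ, Int.fract a ∈ Set.Ico (0:ℝ) 1 :=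
      fun a => ⟨Int.fract_nonneg a, Int.fract_lt_one a⟩
    have heq : Int.fract s = Int.fract t :=
      hinj (hmemf s) (hmemf t) (by rw [hfr, hfr, hcs])
    have hm : s = t + ((⌊s⌋ - ⌊t⌋ : ℤ) : ℝ) := by
      have h5 := Int.floor_add_fract s
      have h6 := Int.floor_add_fract t
      push_cast
      linarith [heq]
    have hθs := hθm (⌊s⌋ - ⌊t⌋) t
    rw [← hm, h1] at hθs
    -- 2π = 2πk(⌊s⌋-⌊t⌋)
    have h7 : 2*π*((k * (⌊s⌋ - ⌊t⌋) : ℤ) : ℝ) = 2*π*(1:ℝ) := by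
      push_cast at hθs ⊢
      linarith
    have h8 : ((k * (⌊s⌋ - ⌊t⌋) : ℤ) : ℝ) = (1:ℝ) :=
      mul_left_cancel₀ (by positivity) h7
    have h9 : k * (⌊s⌋ - ⌊t⌋) = 1 := by exact_mod_cast h8
    have h10 := Int.isUnit_iff.mp (IsUnit.of_mul_eq_one _ h9)
    rcases h10 with h | h <;> rw [h] at hk <;> simp at hk <;> omega
  -- bound for θ on [0,1]
  obtain ⟨B₀, hB₀⟩ := isCompact_Icc.exists_bound_of_continuousOn
    (f := θ) (s := Icc (0:ℝ) 1) hθ.continuousOn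
  have hBnn : 0 ≤ B₀ := le_trans (norm_nonneg _) (hB₀ 0 ⟨le_refl 0, zero_le_one⟩)
  have hBabs : ∀ x ∈ Icc (0:ℝ) 1, |θ x| ≤ B₀ := by
    intro x hx
    have := hB₀ x hx
    rwa [Real.norm_eq_abs] at this
  -- min and max of rr on [0,1]
  obtain ⟨tmin, htmin_mem, htminOn⟩ :=
    isCompact_Icc.exists_isMinOn (⟨0, le_refl 0, zero_le_one⟩ : (Icc (0:ℝ) 1).Nonempty)
      hrr.continuousOn
  obtain ⟨tmax, htmax_mem, htmaxOn⟩ :=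
    isCompact_Icc.exists_isMaxOn (⟨0, le_refl 0, zero_le_one⟩ : (Icc (0:ℝ) 1).Nonempty)
      hrr.continuousOn
  rw [isMinOn_iff] at htminOn
  rw [isMaxOn_iff] at htmaxOn
  have hfr' : ∀ a : ℝ, rr a = rr (Int.fract a) := by
    intro a
    have h3 : a = Int.fract a + (⌊a⌋ : ℤ) := by
      have := Int.floor_add_fract a
      linarith
    conv_lhs => rw [h3]
    rw [hrrint]
  have hmin_glob : ∀ s : ℝ, rr tmin ≤ rr s := by
    intro s
    rw [hfr' s]
    exact htminOn _ ⟨Int.fract_nonneg s, le_of_lt (Int.fract_lt_one s)⟩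
  have hmax_glob : ∀ s : ℝ, rr s ≤ rr tmax := by
    intro s
    rw [hfr' s]
    exact htmaxOn _ ⟨Int.fract_nonneg s, le_of_lt (Int.fract_lt_one s)⟩
  -- k² ≥ 1
  have hksq : (1:ℝ) ≤ (k:ℝ)^2 := by
    have h1 : (1:ℤ) ≤ k^2 := by nlinarith [sq_abs k, abs_nonneg k]
    exact_mod_cast h1
  -- points far left and far right
  obtain ⟨N₁, hN₁⟩ := exists_nat_ge ((θ 0 + B₀) / (2*π))
  obtain ⟨N₂, hN₂⟩ := exists_nat_ge ((B₀ + 2*π - θ 0) / (2*π))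
  set a₁ : ℝ := (((-k*N₁ : ℤ)) : ℝ) with ha₁
  set a₂ : ℝ := (((k*N₂ : ℤ)) : ℝ) with ha₂
  have hθa₁ : θ a₁ ≤ -B₀ := by
    have h1 := hθm (-k*N₁) 0
    rw [zero_add] at h1
    rw [ha₁, h1]
    have h2 : 2*π*(N₁:ℝ) ≥ θ 0 + B₀ := by
      have := mul_le_mul_of_nonneg_left hN₁ (le_of_lt (by linarith : (0:ℝ) < 2*π))
      calc θ 0 + B₀ = 2*π*((θ 0 + B₀)/(2*π)) := by field_simp
      _ ≤ 2*π*(N₁:ℝ) := this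
    have h3 : (1:ℝ)*(N₁:ℝ) ≤ (k:ℝ)^2*(N₁:ℝ) :=
      mul_le_mul_of_nonneg_right hksq (Nat.cast_nonneg N₁)
    have h4 : 2*π*((1:ℝ)*(N₁:ℝ)) ≤ 2*π*((k:ℝ)^2*(N₁:ℝ)) :=
      mul_le_mul_of_nonneg_left h3 (by linarith)
    push_cast
    nlinarith [h2, h4]
  have hθa₂ : B₀ + 2*π ≤ θ a₂ := by
    have h1 := hθm (k*N₂) 0
    rw [zero_add] at h1
    rw [ha₂, h1]
    have h2 : 2*π*(N₂:ℝ) ≥ B₀ + 2*π - θ 0 := by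
      have := mul_le_mul_of_nonneg_left hN₂ (le_of_lt (by linarith : (0:ℝ) < 2*π))
      calc B₀ + 2*π - θ 0 = 2*π*((B₀ + 2*π - θ 0)/(2*π)) := by field_simp
      _ ≤ 2*π*(N₂:ℝ) := this
    have h3 : (1:ℝ)*(N₂:ℝ) ≤ (k:ℝ)^2*(N₂:ℝ) :=
      mul_le_mul_of_nonneg_right hksq (Nat.cast_nonneg N₂)
    have h4 : 2*π*((1:ℝ)*(N₂:ℝ)) ≤ 2*π*((k:ℝ)^2*(N₂:ℝ)) :=
      mul_le_mul_of_nonneg_left h3 (by linarith)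
    push_cast
    nlinarith [h2, h4]
  -- apply Miranda
  set F : ℝ × ℝ → ℝ :=
    fun q => θ (tmin + q.2*(tmax - tmin)) + 2*π - θ (a₁ + q.1*(a₂ - a₁)) with hF
  set G : ℝ × ℝ → ℝ :=
    fun q => rr (a₁ + q.1*(a₂ - a₁)) - rr (tmin + q.2*(tmax - tmin)) with hG
  have hFc : Continuous F := by
    rw [hF]
    exact ((hθ.comp (continuous_const.add (continuous_snd.mul continuous_const))).add
      continuous_const).sub
      (hθ.comp (continuous_const.add (continuous_fst.mul continuous_const)))
  have hGc : Continuous G := by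
    rw [hG]
    exact (hrr.comp (continuous_const.add (continuous_fst.mul continuous_const))).sub
      (hrr.comp (continuous_const.add (continuous_snd.mul continuous_const)))
  have hzmem : ∀ y ∈ Icc (0:ℝ) 1, tmin + y*(tmax - tmin) ∈ Icc (0:ℝ) 1 := by
    intro y hy
    obtain ⟨hy0, hy1⟩ := hy
    obtain ⟨he10, he11⟩ := htmin_mem
    obtain ⟨he20, he21⟩ := htmax_mem
    constructor
    · nlinarith [mul_nonneg he10 (by linarith : (0:ℝ) ≤ 1 - y), mul_nonneg he20 hy0]
    · nlinarith [mul_nonneg (by linarith : (0:ℝ) ≤ 1 - tmin) (by linarith : (0:ℝ) ≤ 1 - y),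
        mul_nonneg (by linarith : (0:ℝ) ≤ 1 - tmax) hy0]
  have hm1 : ∀ y ∈ Icc (0:ℝ) 1, 0 ≤ F (0, y) := by
    intro y hy
    rw [hF]
    simp only []
    rw [show a₁ + 0*(a₂ - a₁) = a₁ by ring]
    have h5 := hBabs _ (hzmem y hy)
    have h6 := abs_le.mp h5
    linarith [hθa₁, h6.1]
  have hm2 : ∀ y ∈ Icc (0:ℝ) 1, F (1, y) ≤ 0 := by
    intro y hy
    rw [hF]
    simp only []
    rw [show a₁ + 1*(a₂ - a₁) = a₂ by ring]
    have h5 := hBabs _ (hzmem y hy)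
    have h6 := abs_le.mp h5
    linarith [hθa₂, h6.2]
  have hm3 : ∀ x ∈ Icc (0:ℝ) 1, 0 ≤ G (x, 0) := by
    intro x hx
    rw [hG]
    simp only []
    rw [show tmin + 0*(tmax - tmin) = tmin by ring]
    have := hmin_glob (a₁ + x*(a₂ - a₁))
    linarith
  have hm4 : ∀ x ∈ Icc (0:ℝ) 1, G (x, 1) ≤ 0 := by
    intro x hx
    rw [hG]
    simp only []
    rw [show tmin + 1*(tmax - tmin) = tmax by ring]
    have := hmax_glob (a₁ + x*(a₂ - a₁))
    linarith
  obtain ⟨q, hq1, hq2, hqF, hqG⟩ := scw_miranda hFc hGc hm1 hm2 hm3 hm4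
  rw [hF] at hqF
  rw [hG] at hqG
  simp only [] at hqF hqG
  exact hsep (a₁ + q.1*(a₂ - a₁)) (tmin + q.2*(tmax - tmin)) ⟨by linarith, by linarith⟩

/-- A simple closed curve in the plane has winding number `0` or `±1` around every point not
on the curve; hence a closed curve winding (in absolute value) at least twice around some
point has a self-intersection.  The closed curve is a continuous `c : ℝ → ℂ` of period 1,
simplicity means injectivity on `[0,1)`, and the winding around `p` is `(θ 1 − θ 0)/2π` for a
continuous angular lift `θ` with `c t − p = r t · exp(i θ t)`, `r t > 0`. -/
theorem stmt16 (c : ℝ → ℂ) (θ r : ℝ → ℝ) (p : ℂ)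
    (hc : Continuous c) (hper : ∀ t : ℝ, c (t + 1) = c t)
    (hθ : Continuous θ) (hr : ∀ t : ℝ, 0 < r t)
    (hlift : ∀ t : ℝ, c t - p = (r t : ℂ) * Complex.exp ((θ t : ℂ) * Complex.I)) :
    (Set.InjOn c (Set.Ico (0 : ℝ) 1) →
      θ 1 - θ 0 = 0 ∨ θ 1 - θ 0 = 2 * Real.pi ∨ θ 1 - θ 0 = -(2 * Real.pi)) ∧
    (4 * Real.pi ≤ |θ 1 - θ 0| → ¬ Set.InjOn c (Set.Ico (0 : ℝ) 1)) := by
  have pi_pos := Real.pi_pos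
  have habs : ∀ t, r t = ‖c t - p‖ := by
    intro t
    rw [hlift t, norm_mul, Complex.norm_real, Complex.norm_exp_ofReal_mul_I, mul_one, Real.norm_eq_abs,
      abs_of_pos (hr t)]
  have hrc : Continuous r := by
    have h1 : r = fun t => ‖c t - p‖ := funext habs
    rw [h1]
    exact continuous_norm.comp (hc.sub continuous_const)
  have hrper : ∀ t, r (t + 1) = r t := by
    intro t; rw [habs, habs, hper]
  have hE : ∀ t : ℝ, ∃ m : ℤ, (θ (t+1) - θ t) = 2*π*m := by
    intro t
    apply scw_exp_eq_one
    have e1 := hlift (t+1)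
    have e2 := hlift t
    rw [hper t] at e1
    have e3 : ((r (t+1) : ℝ):ℂ) * Complex.exp ((θ (t+1) :ℂ) * Complex.I)
        = ((r t : ℝ):ℂ) * Complex.exp ((θ t :ℂ) * Complex.I) := e1.symm.trans e2
    rw [hrper t] at e3
    have hrne : ((r t : ℝ):ℂ) ≠ 0 := Complex.ofReal_ne_zero.2 (ne_of_gt (hr t))
    have e4 : Complex.exp ((θ (t+1) :ℂ) * Complex.I) = Complex.exp ((θ t :ℂ) * Complex.I) :=
      mul_left_cancel₀ hrne e3
    have e5 : ((θ (t+1) - θ t : ℝ):ℂ) * Complex.I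
        = (θ (t+1):ℂ)*Complex.I - (θ t:ℂ)*Complex.I := by push_cast; ring
    rw [e5, Complex.exp_sub, e4, div_self (Complex.exp_ne_zero _)]
  have hEc : Continuous fun t : ℝ => θ (t+1) - θ t :=
    (hθ.comp (continuous_id.add continuous_const)).sub hθ
  have hEconst : ∀ t : ℝ, θ (t+1) - θ t = θ (0+1) - θ 0 := by
    intro t
    rcases le_total 0 t with h | h
    · exact scw_const_int h hEc (fun x _ => hE x)
    · exact (scw_const_int h hEc (fun x _ => hE x)).symm
  obtain ⟨k, hk⟩ := hE 0
  have hk' : θ 1 - θ 0 = 2*π*k := by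
    have : (0:ℝ) + 1 = 1 := by norm_num
    rwa [this] at hk
  have hθper : ∀ t, θ (t+1) = θ t + 2*π*k := by
    intro t
    have h1 := hEconst t
    have h2 : θ (0+1) - θ 0 = θ 1 - θ 0 := by norm_num
    rw [h2, hk'] at h1
    linarith
  constructor
  · intro hinj
    have hknot : ¬ (2 ≤ |k|) := fun habs2 =>
      scw_main hθ hrc hr hlift hper hθper habs2 hinj
    have hk0 : |k| ≤ 1 := by omega
    have hk0' := abs_le.mp hk0
    have hk1 : k = -1 ∨ k = 0 ∨ k = 1 := by omega
    rcases hk1 with h | h | h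
    · right; right; rw [hk', h]; push_cast; ring
    · left; rw [hk', h]; push_cast; ring
    · right; left; rw [hk', h]; push_cast; ring
  · intro hge hinj
    refine scw_main hθ hrc hr hlift hper hθper ?_ hinj
    by_contra hcon
    push_neg at hcon
    have h1 : |k| ≤ 1 := by omega
    have h3 : ((|k|:ℤ):ℝ) ≤ 1 := by exact_mod_cast h1
    rw [Int.cast_abs] at h3
    have h4 : |θ 1 - θ 0| ≤ 2*π := by
      rw [hk', abs_mul, abs_of_pos (by linarith : (0:ℝ) < 2*π)]
      nlinarith [h3]
    linarith [hge, h4]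

end SCW
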